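/- In the game Nim^1_{3,=2}, let x = (x_1, x_2, x_3) be a position with 0 ≤ x_1 ≤ x_2 ≤ x_3 and x_1 = 0. Then G(x) = 0 and G⁻(x) = 1 if x_2 is even, and G(x) = 1 and G⁻(x) = 0 if x_2 is odd. -/

import Mathlib

/-- The minimum excludant of a set of natural numbers. -/
noncomputable def mex (S : Set ℕ) : ℕ := sInf {n : ℕ | n ∉ S}

/-- A move in slow exact 2-Nim on 3 piles `Nim¹_{3,=2}`: exactly two
strictly positive coordinates are decreased by one token. -/
def ExactMove (x y : Fin 3 → ℕ) : Prop :=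
  (∀ i, y i ≤ x i ∧ x i ≤ y i + 1) ∧
  (Finset.univ.filter fun i => y i < x i).card = 2

theorem ExactMove.sum_lt {x y : Fin 3 → ℕ} (h : ExactMove x y) :
    ∑ i, y i < ∑ i, x i := by
  obtain ⟨h1, h2⟩ := h
  obtain ⟨i, hi⟩ := Finset.card_pos.mp (h2 ▸ (by norm_num : (0:ℕ) < 2))
  rw [Finset.mem_filter] at hi
  exact Finset.sum_lt_sum (fun j _ => (h1 j).1) ⟨i, Finset.mem_univ i, hi.2⟩

/-- The normal-play Sprague–Grundy function of `Nim¹_{3,=2}`: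
`G(x) = mex {G(y) : y reachable from x in one move}`. -/
noncomputable def exactG (x : Fin 3 → ℕ) : ℕ :=
  mex (Set.range fun y : {y : Fin 3 → ℕ // ExactMove x y} => exactG y.1)
termination_by ∑ i, x i
decreasing_by exact y.2.sum_lt

open Classical in
/-- The misère Sprague–Grundy function of `Nim¹_{3,=2}`: the same `mex`
recursion at nonterminal positions, and value `1` at terminal positions. -/
noncomputable def exactGm (x : Fin 3 → ℕ) : ℕ :=
  if ∃ y, ExactMove x y then
    mex (Set.range fun y : {y : Fin 3 → ℕ // ExactMove x y} => exactGm y.1)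
  else 1
termination_by ∑ i, x i
decreasing_by exact y.2.sum_lt

lemma mex_empty : mex (∅ : Set ℕ) = 0 := by
  simp [mex, Nat.sInf_eq_zero]

lemma mex_single (a : ℕ) : mex {a} = if a = 0 then 1 else 0 := by
  unfold mex
  split
  · subst a
    have h1 : (1:ℕ) ∈ {n : ℕ | n ∉ ({0} : Set ℕ)} := by simp
    refine le_antisymm (Nat.sInf_le h1) ?_
    have hm := Nat.sInf_mem (s := {n : ℕ | n ∉ ({0} : Set ℕ)}) ⟨1, h1⟩
    rw [Set.mem_setOf_eq, Set.mem_singleton_iff] at hm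
    omega
  · exact (Nat.sInf_eq_zero).mpr (Or.inl (by simp; omega))

lemma move_eq_aux (x y : Fin 3 → ℕ)
    (hy0 : y 0 = 0) (h1m : y 1 < x 1) (h2m : y 2 < x 2)
    (hx1 : x 1 ≤ y 1 + 1) (hx2 : x 2 ≤ y 2 + 1) :
    y = ![0, x 1 - 1, x 2 - 1] := by
  funext i
  fin_cases i <;> simp_all <;> omega

lemma filter_sub_aux (x y : Fin 3 → ℕ) (h0 : x 0 = 0) :
    (Finset.univ.filter fun i => y i < x i) ⊆ ({1, 2} : Finset (Fin 3)) := by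
  intro i hi
  rw [Finset.mem_filter] at hi
  fin_cases i <;> simp_all

lemma move_iff (x y : Fin 3 → ℕ) (h0 : x 0 = 0) (h1 : 1 ≤ x 1) (h12 : x 1 ≤ x 2) :
    ExactMove x y ↔ y = ![0, x 1 - 1, x 2 - 1] := by
  constructor
  · rintro ⟨ha, hb⟩
    have hy0 : y 0 = 0 := by have := (ha 0).1; omega
    have heq : (Finset.univ.filter fun i => y i < x i) = ({1, 2} : Finset (Fin 3)) :=
      Finset.eq_of_subset_of_card_le (filter_sub_aux x y h0) (by rw [hb]; decide)
    have h1m : (1 : Fin 3) ∈ Finset.univ.filter fun i => y i < x i := by rw [heq]; decide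
    have h2m : (2 : Fin 3) ∈ Finset.univ.filter fun i => y i < x i := by rw [heq]; decide
    rw [Finset.mem_filter] at h1m h2m
    exact move_eq_aux x y hy0 h1m.2 h2m.2 (ha 1).2 (ha 2).2
  · rintro rfl
    constructor
    · intro i; fin_cases i <;> simp_all <;> omega
    · have : (Finset.univ.filter fun i => ![0, x 1 - 1, x 2 - 1] i < x i)
          = ({1, 2} : Finset (Fin 3)) := by
        ext i; fin_cases i <;> simp_all <;> omega
      rw [this]; decide

lemma no_move (x : Fin 3 → ℕ) (h0 : x 0 = 0) (h1 : x 1 = 0) : ¬ ∃ y, ExactMove x y := by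
  rintro ⟨y, ha, hb⟩
  have hsub : (Finset.univ.filter fun i => y i < x i) ⊆ ({2} : Finset (Fin 3)) := by
    intro i hi
    rw [Finset.mem_filter] at hi
    fin_cases i <;> simp_all
  have := Finset.card_le_card hsub
  rw [hb] at this
  simp at this

lemma terminal_vals (x : Fin 3 → ℕ) (h0 : x 0 = 0) (h1 : x 1 = 0) :
    exactG x = 0 ∧ exactGm x = 1 := by
  have hempty : IsEmpty {y : Fin 3 → ℕ // ExactMove x y} := by
    constructor; rintro ⟨y, hy⟩; exact no_move x h0 h1 ⟨y, hy⟩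
  constructor
  · rw [exactG]
    rw [Set.range_eq_empty _]
    exact mex_empty
  · rw [exactGm]
    rw [if_neg (no_move x h0 h1)]

lemma main (b : ℕ) : ∀ x : Fin 3 → ℕ, x 0 = 0 → x 1 = b → x 1 ≤ x 2 →
    exactG x = b % 2 ∧ exactGm x = (b + 1) % 2 := by
  induction b with
  | zero =>
    intro x h0 h1 _
    simpa using terminal_vals x h0 h1
  | succ b ih =>
    intro x h0 h1 h12
    set y₀ : Fin 3 → ℕ := ![0, x 1 - 1, x 2 - 1] with hy₀
    have hiy := ih y₀ (by simp [hy₀]) (by simp [hy₀]; omega) (by simp [hy₀]; omega)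
    have hmove : ExactMove x y₀ := (move_iff x y₀ h0 (by omega) h12).mpr rfl
    have hrangeG : (Set.range fun y : {y : Fin 3 → ℕ // ExactMove x y} => exactG y.1)
        = {exactG y₀} := by
      ext n
      constructor
      · rintro ⟨⟨y, hy⟩, rfl⟩
        simp [(move_iff x y h0 (by omega) h12).mp hy, hy₀]
      · rintro rfl
        exact ⟨⟨y₀, hmove⟩, rfl⟩
    have hrangeGm : (Set.range fun y : {y : Fin 3 → ℕ // ExactMove x y} => exactGm y.1)
        = {exactGm y₀} := by
      ext n
      constructor
      · rintro ⟨⟨y, hy⟩, rfl⟩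
        simp [(move_iff x y h0 (by omega) h12).mp hy, hy₀]
      · rintro rfl
        exact ⟨⟨y₀, hmove⟩, rfl⟩
    constructor
    · rw [exactG, hrangeG, hiy.1, mex_single]
      split <;> omega
    · rw [exactGm, if_pos ⟨y₀, hmove⟩, hrangeGm, hiy.2, mex_single]
      split <;> omega

/-- In `Nim¹_{3,=2}`, a nondecreasing position with smallest coordinate `0`
is a `(0,1)`-position if its middle coordinate is even, and a
`(1,0)`-position if its middle coordinate is odd. -/
theorem stmt13 (x : Fin 3 → ℕ) (h01 : x 0 ≤ x 1) (h12 : x 1 ≤ x 2)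
    (h0 : x 0 = 0) :
    (Even (x 1) → exactG x = 0 ∧ exactGm x = 1) ∧
    (Odd (x 1) → exactG x = 1 ∧ exactGm x = 0) := by
  obtain ⟨hG, hGm⟩ := main (x 1) x h0 rfl h12
  constructor
  · intro h; rw [Nat.even_iff] at h
    constructor <;> omega
  · intro h; rw [Nat.odd_iff] at h
    constructor <;> omega
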